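/- arXiv:1604.05237 — 2 statements merged into one kernel-verified Lean document; each statement's English description precedes it below -/
import Mathlib

section
/- Let λ be a real number with 0 < λ < π, and for each natural number k ≥ 0 let N(k) denote the number of integers j with 1 ≤ j ≤ 2k such that λ ≤ 2πj/(2k+1) ≤ 2π − λ. If for every positive integer l the set {k : N(k) = 2l} has exactly two elements, then λ = π/2. -/
lemma combA (g : ℕ → ℕ) (h0 : g 0 = 0) (hmono : ∀ k, g k ≤ g (k+1))
    (hstep : ∀ k, g (k+1) ≤ g k + 1)
    (htwo : ∀ l, 1 ≤ l → {k | g k = l}.ncard = 2) :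
    ∃ m, ∀ l, 1 ≤ l → g (m + 2*l) = l := by
  have hM : Monotone g := monotone_nat_of_le_succ hmono
  have hpair : ∀ l, 1 ≤ l → ∃ a, {k | g k = l} = {a, a+1} := by
    intro l hl
    obtain ⟨x, y, hxy, hS⟩ := Set.ncard_eq_two.mp (htwo l hl)
    have hx : g x = l := by
      have : x ∈ {k | g k = l} := by rw [hS]; simp
      exact this
    have hy : g y = l := by
      have : y ∈ {k | g k = l} := by rw [hS]; simp
      exact this
    rcases hxy.lt_or_gt with h | h
    · refine ⟨x, ?_⟩
      rcases Nat.lt_or_ge (x+1) y with h1 | h1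
      · exfalso
        have hmid : g (x+1) = l := le_antisymm (hy ▸ hM h1.le) (hx ▸ hM (Nat.le_succ x))
        have : x + 1 ∈ {k | g k = l} := hmid
        rw [hS] at this
        simp at this
        omega
      · have : y = x + 1 := by omega
        rw [hS, this]
    · refine ⟨y, ?_⟩
      rcases Nat.lt_or_ge (y+1) x with h1 | h1
      · exfalso
        have hmid : g (y+1) = l := le_antisymm (hx ▸ hM h1.le) (hy ▸ hM (Nat.le_succ y))
        have : y + 1 ∈ {k | g k = l} := hmid
        rw [hS] at this
        simp at this
        omega
      · have : x = y + 1 := by omega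
        rw [hS, this, Set.pair_comm]
  choose a ha using hpair
  have hga : ∀ l (hl : 1 ≤ l), g (a l hl) = l ∧ g (a l hl + 1) = l := by
    intro l hl
    constructor
    · have : a l hl ∈ {k | g k = l} := by rw [ha l hl]; simp
      exact this
    · have : a l hl + 1 ∈ {k | g k = l} := by rw [ha l hl]; simp
      exact this
  have hastep : ∀ l (hl : 1 ≤ l), a (l+1) (by omega) = a l hl + 2 := by
    intro l hl
    obtain ⟨h1, h2⟩ := hga l hl
    have h3 : g (a l hl + 2) = l + 1 := by
      have hge : l ≤ g (a l hl + 2) := by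
        have := hM (show a l hl + 1 ≤ a l hl + 2 by omega); omega
      have hle : g (a l hl + 2) ≤ l + 1 := by
        have h4 := hstep (a l hl + 1)
        have hrw : a l hl + 1 + 1 = a l hl + 2 := by omega
        rw [hrw] at h4
        omega
      have hne : g (a l hl + 2) ≠ l := by
        intro h
        have : a l hl + 2 ∈ {k | g k = l} := h
        rw [ha l hl] at this
        simp only [Set.mem_insert_iff, Set.mem_singleton_iff] at this
        omega
      omega
    have hmem : a l hl + 2 ∈ {k | g k = l + 1} := h3
    rw [ha (l+1) (by omega)] at hmem
    simp at hmem
    rcases hmem with h' | h'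
    · omega
    · exfalso
      have heq : a (l+1) (by omega : 1 ≤ l + 1) = a l hl + 1 := by omega
      have hcontr := (hga (l+1) (by omega)).1
      rw [heq] at hcontr
      omega
  have haff : ∀ l (hl : 1 ≤ l), a l hl = a 1 le_rfl + 2*(l-1) := by
    intro l hl
    induction l with
    | zero => omega
    | succ n ih =>
      rcases Nat.lt_or_ge n 1 with h | h
      · have hn : n = 0 := by omega
        subst hn
        simp
      · rw [hastep n h, ih h]; omega
  have ha1 : 1 ≤ a 1 le_rfl := by
    by_contra h
    have h' : a 1 le_rfl = 0 := by omega
    have := (hga 1 le_rfl).1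
    rw [h'] at this
    omega
  refine ⟨a 1 le_rfl - 1, fun l hl => ?_⟩
  have h1 := (hga l hl).2
  have h2 := haff l hl
  have h3 : a 1 le_rfl - 1 + 2*l = a l hl + 1 := by omega
  rw [h3, h1]


lemma archB (c : ℝ) (m : ℕ)
    (h : ∀ l : ℕ, 1 ≤ l → ((m:ℝ) + l < c * (2*m + 4*l + 1) ∧
        c * (2*m + 4*l + 1) ≤ (m:ℝ) + l + 1)) : c = 1/4 := by
  have key : ∀ n : ℕ, 1 ≤ n → |4*c - 1| * n < 1 := by
    intro n hn
    obtain ⟨h1l, h1u⟩ := h 1 le_rfl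
    obtain ⟨h2l, h2u⟩ := h (1+n) (by omega)
    push_cast at h1l h1u h2l h2u
    have habs : |(4*c-1) * (n:ℝ)| < 1 := by
      rw [abs_lt]
      constructor
      · nlinarith
      · nlinarith
    calc |4*c-1| * (n:ℝ) = |(4*c-1) * (n:ℝ)| := by rw [abs_mul, Nat.abs_cast]
      _ < 1 := habs
  by_contra hc
  have hd : 0 < |4*c - 1| := abs_pos.mpr (by intro h'; apply hc; linarith)
  obtain ⟨n, hn⟩ := exists_nat_gt (1 / |4*c - 1|)
  have hn1 : 1 ≤ n := by
    by_contra h'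
    have : n = 0 := by omega
    rw [this] at hn
    simp at hn
    have : 0 < 1 / |4*c-1| := by positivity
    linarith
  have := key n hn1
  rw [div_lt_iff₀ hd] at hn
  nlinarith


/-- For `0 < λ < π`, let `N k` be the number of integers `1 ≤ j ≤ 2k` with
`λ ≤ 2πj/(2k+1) ≤ 2π − λ`.  If for every positive integer `l` the set
`{k : N k = 2l}` has exactly two elements, then `λ = π/2`. -/
theorem stmt_2 (lam : ℝ) (hlam0 : 0 < lam) (hlampi : lam < Real.pi)
    (N : ℕ → ℕ)
    (hN : ∀ k : ℕ, N k = Nat.card {j : ℕ // 1 ≤ j ∧ j ≤ 2 * k ∧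
      lam ≤ 2 * Real.pi * j / (2 * k + 1) ∧
      2 * Real.pi * j / (2 * k + 1) ≤ 2 * Real.pi - lam})
    (htwo : ∀ l : ℕ, 1 ≤ l → {k : ℕ | N k = 2 * l}.ncard = 2) :
    lam = Real.pi / 2 := by
  have hpi := Real.pi_pos
  have h2pi : (0:ℝ) < 2 * Real.pi := by positivity
  set c : ℝ := lam / (2 * Real.pi) with hcdef
  have hclam : c * (2 * Real.pi) = lam := div_mul_cancel₀ _ (ne_of_gt h2pi)
  have hc0 : 0 < c := by positivity
  have hc2 : c < 1/2 := by
    rw [hcdef, div_lt_iff₀ h2pi]; linarith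
  set aa : ℕ → ℝ := fun k => c * (2*k+1) with haadef
  have haa0 : ∀ k, 0 < aa k := fun k => by
    have : (0:ℝ) < 2*k+1 := by positivity
    positivity
  have haalt : ∀ k : ℕ, aa k < (k:ℝ) + 1/2 := by
    intro k
    have h1 : (0:ℝ) < 2*k+1 := by positivity
    have : aa k < (1/2) * (2*k+1) := by
      apply mul_lt_mul_of_pos_right hc2 h1
    linarith
  set M : ℕ → ℕ := fun k => ⌊(2*(k:ℝ)+1) - aa k⌋₊ with hMdef
  have hargpos : ∀ k : ℕ, (0:ℝ) ≤ 2*(k:ℝ)+1 - aa k := by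
    intro k; have := haalt k; linarith [Nat.cast_nonneg (α := ℝ) k]
  have hMle : ∀ k, (M k : ℝ) ≤ 2*(k:ℝ)+1 - aa k := fun k => Nat.floor_le (hargpos k)
  have hMgt : ∀ k : ℕ, 2*(k:ℝ) - aa k < M k := by
    intro k
    have h := Nat.sub_one_lt_floor (2*(k:ℝ)+1 - aa k)
    have : (M k : ℝ) = ⌊(2*(k:ℝ)+1) - aa k⌋₊ := rfl
    rw [this]
    linarith
  have hMk : ∀ k, k ≤ M k := by
    intro k
    apply Nat.le_floor
    have := haalt k
    push_cast
    linarith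
  have hM2k : ∀ k, M k ≤ 2*k := by
    intro k
    have : M k < 2*k+1 := by
      rw [hMdef]
      rw [Nat.floor_lt (hargpos k)]
      have := haa0 k
      push_cast
      linarith
    omega
  -- divisibility conditions rewritten
  have hdenpos : ∀ k : ℕ, (0:ℝ) < 2*(k:ℝ)+1 := fun k => by positivity
  have hA : ∀ k j : ℕ, (lam ≤ 2 * Real.pi * j / (2 * k + 1)) ↔ aa k ≤ (j:ℝ) := by
    intro k j
    have hkey : aa k * (2*Real.pi) = lam * (2*(k:ℝ)+1) := by
      have : aa k = c * (2*(k:ℝ)+1) := rfl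
      rw [this, ← hclam]; ring
    rw [le_div_iff₀ (hdenpos k)]
    constructor
    · intro h
      have h' : aa k * (2*Real.pi) ≤ (j:ℝ) * (2*Real.pi) := by rw [hkey]; linarith
      exact le_of_mul_le_mul_right h' h2pi
    · intro h
      have h' := mul_le_mul_of_nonneg_right h (le_of_lt h2pi)
      rw [hkey] at h'
      linarith
  have hB : ∀ k j : ℕ, (2 * Real.pi * j / (2 * k + 1) ≤ 2 * Real.pi - lam)
      ↔ (j:ℝ) ≤ 2*(k:ℝ)+1 - aa k := by
    intro k j
    have hkey : (2*(k:ℝ)+1 - aa k) * (2*Real.pi) = (2*Real.pi - lam) * (2*(k:ℝ)+1) := by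
      have h1 : aa k = c * (2*(k:ℝ)+1) := rfl
      rw [h1, ← hclam]; ring
    rw [div_le_iff₀ (hdenpos k)]
    constructor
    · intro h
      have h' : (j:ℝ) * (2*Real.pi) ≤ (2*(k:ℝ)+1 - aa k) * (2*Real.pi) := by
        rw [hkey]; linarith
      exact le_of_mul_le_mul_right h' h2pi
    · intro h
      have h' := mul_le_mul_of_nonneg_right h (le_of_lt h2pi)
      rw [hkey] at h'
      linarith
  -- the set computation
  have hset : ∀ k : ℕ, {j : ℕ | 1 ≤ j ∧ j ≤ 2 * k ∧
      lam ≤ 2 * Real.pi * j / (2 * k + 1) ∧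
      2 * Real.pi * j / (2 * k + 1) ≤ 2 * Real.pi - lam}
      = ↑(Finset.Icc (2*k+1 - M k) (M k)) := by
    intro k
    ext j
    simp only [Set.mem_setOf_eq, Finset.coe_Icc, Set.mem_Icc]
    rw [hA k j, hB k j]
    constructor
    · rintro ⟨h1, h2, h3, h4⟩
      have hjM : j ≤ M k := Nat.le_floor h4
      have hsub : ((2*k+1-j : ℕ) : ℝ) = 2*(k:ℝ)+1 - j := by
        rw [Nat.cast_sub (by omega)]
        push_cast; ring
      have : 2*k+1-j ≤ M k := by
        apply Nat.le_floor
        rw [hsub]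
        linarith
      exact ⟨by omega, hjM⟩
    · rintro ⟨h1, h2⟩
      have hM2 := hM2k k
      have hjr : (j:ℝ) ≤ M k := by exact_mod_cast h2
      have hlow : ((2*k+1 - M k : ℕ) : ℝ) ≤ (j:ℝ) := by exact_mod_cast h1
      have hsub : ((2*k+1 - M k : ℕ) : ℝ) = 2*(k:ℝ)+1 - M k := by
        rw [Nat.cast_sub (by omega)]
        push_cast; ring
      refine ⟨by omega, by omega, ?_, ?_⟩
      · rw [hsub] at hlow
        have := hMle k
        linarith
      · have := hMle k
        linarith
  -- N k = 2 * (M k - k)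
  have hNg : ∀ k, N k = 2 * (M k - k) := by
    intro k
    rw [hN k]
    have e1 : Nat.card {j : ℕ // 1 ≤ j ∧ j ≤ 2 * k ∧
        lam ≤ 2 * Real.pi * j / (2 * k + 1) ∧
        2 * Real.pi * j / (2 * k + 1) ≤ 2 * Real.pi - lam}
        = ({j : ℕ | 1 ≤ j ∧ j ≤ 2 * k ∧
        lam ≤ 2 * Real.pi * j / (2 * k + 1) ∧
        2 * Real.pi * j / (2 * k + 1) ≤ 2 * Real.pi - lam}).ncard :=
      Nat.card_coe_set_eq _
    rw [e1, hset k, Set.ncard_coe_finset, Nat.card_Icc]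
    have := hMk k
    have := hM2k k
    omega
  set g : ℕ → ℕ := fun k => M k - k with hgdef
  have htwo' : ∀ l, 1 ≤ l → {k | g k = l}.ncard = 2 := by
    intro l hl
    have hseteq : {k : ℕ | N k = 2*l} = {k : ℕ | g k = l} := by
      ext k
      simp only [Set.mem_setOf_eq, hNg k]
      have := hMk k
      have hgk : g k = M k - k := rfl
      omega
    rw [← hseteq]
    exact htwo l hl
  have hg0 : g 0 = 0 := by
    have hM0 : M 0 = 0 := by
      have e : M 0 = ⌊2*((0:ℕ):ℝ)+1 - aa 0⌋₊ := rfl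
      rw [e]
      apply Nat.floor_eq_zero.mpr
      have := haa0 0
      push_cast
      linarith
    simp [hgdef, hM0]
  have haastep : ∀ k : ℕ, aa (k+1) = aa k + 2*c := by
    intro k
    have e : aa (k+1) = c * (2*((k+1:ℕ):ℝ)+1) := rfl
    have e2 : aa k = c * (2*(k:ℝ)+1) := rfl
    rw [e, e2]
    push_cast
    ring
  have hup : ∀ k, g k ≤ g (k+1) := by
    intro k
    have hstep1 : M k + 1 ≤ M (k+1) := by
      apply Nat.le_floor
      have h1 := hMle k
      have h2 := haastep k
      push_cast
      push_cast at h1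
      linarith
    have := hMk k
    have := hMk (k+1)
    simp only [hgdef]
    omega
  have hdown : ∀ k, g (k+1) ≤ g k + 1 := by
    intro k
    have hstep2 : M (k+1) < M k + 3 := by
      rw [show M (k+1) = ⌊2*((k+1:ℕ):ℝ)+1 - aa (k+1)⌋₊ from rfl]
      rw [Nat.floor_lt (hargpos (k+1))]
      have h1 := hMgt k
      have h2 := haastep k
      push_cast
      linarith
    have := hMk k
    have := hMk (k+1)
    simp only [hgdef]
    omega
  obtain ⟨m, hm⟩ := combA g hg0 hup hdown htwo'
  have hc14 : c = 1/4 := by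
    apply archB c m
    intro l hl
    have hgl := hm l hl
    have hMval : M (m+2*l) = m + 3*l := by
      have h1 := hMk (m+2*l)
      have h2 : g (m+2*l) = M (m+2*l) - (m+2*l) := rfl
      omega
    have hcast : ((M (m+2*l) : ℕ) : ℝ) = (m:ℝ) + 3*l := by
      rw [hMval]; push_cast; ring
    have haav : aa (m+2*l) = c * (2*(m:ℝ) + 4*l + 1) := by
      have e : aa (m+2*l) = c * (2*((m+2*l : ℕ):ℝ)+1) := rfl
      rw [e]; push_cast; ring
    have hu := hMle (m+2*l)
    have hlo := hMgt (m+2*l)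
    rw [hcast, haav] at hu hlo
    push_cast at hu hlo
    constructor
    · linarith
    · linarith
  rw [← hclam, hc14]
  ring
end

section
/- Let λ ∈ (0, π) with λ ≠ π/2. Then there exists a positive even integer 2l such that the number of positive integers k with card{j : 1 ≤ j ≤ 2k, λ ≤ 2πj/(2k+1) ≤ 2π−λ} = 2l is not equal to 2. -/
private lemma ncard_Icc_nat (a b : ℕ) : (Set.Icc a b).ncard = b + 1 - a := by
  rw [← Finset.coe_Icc, Set.ncard_coe_finset, Nat.card_Icc]

private lemma card_formula (lam : ℝ) (h0 : 0 < lam) (hpi : lam < Real.pi) (k : ℕ) :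
    Nat.card {j : ℕ // 1 ≤ j ∧ j ≤ 2 * k ∧
        lam ≤ 2 * Real.pi * j / (2 * k + 1) ∧
        2 * Real.pi * j / (2 * k + 1) ≤ 2 * Real.pi - lam}
      = (2 * ((k : ℤ) + 1 - ⌈lam * (2 * (k : ℝ) + 1) / (2 * Real.pi)⌉)).toNat := by
  have hπ := Real.pi_pos
  have h2π : (0:ℝ) < 2 * Real.pi := by linarith
  have hden : (0:ℝ) < 2 * (k:ℝ) + 1 := by positivity
  set c : ℤ := ⌈lam * (2 * (k : ℝ) + 1) / (2 * Real.pi)⌉ with hc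
  have hc1 : 1 ≤ c := Int.ceil_pos.mpr (by positivity)
  have hck : c ≤ (k : ℤ) + 1 := by
    apply Int.ceil_le.mpr
    rw [div_le_iff₀ h2π]
    push_cast
    nlinarith
  have key : ∀ j : ℕ, (1 ≤ j ∧ j ≤ 2 * k ∧
      lam ≤ 2 * Real.pi * j / (2 * k + 1) ∧
      2 * Real.pi * j / (2 * k + 1) ≤ 2 * Real.pi - lam)
      ↔ (c.toNat ≤ j ∧ j ≤ (2 * (k:ℤ) + 1 - c).toNat) := by
    intro j
    have hA : (lam ≤ 2 * Real.pi * j / (2 * k + 1)) ↔ c ≤ (j : ℤ) := by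
      rw [hc, Int.ceil_le]
      push_cast
      rw [div_le_iff₀ h2π, le_div_iff₀ hden]
      constructor <;> intro h <;> nlinarith
    have hB : (2 * Real.pi * j / (2 * k + 1) ≤ 2 * Real.pi - lam)
        ↔ c ≤ 2 * (k:ℤ) + 1 - (j:ℤ) := by
      rw [hc, Int.ceil_le]
      push_cast
      rw [div_le_iff₀ h2π, div_le_iff₀ hden]
      constructor <;> intro h <;> nlinarith
    rw [hA, hB]
    omega
  -- rewrite the subtype as the Icc
  have hEq : {j : ℕ | 1 ≤ j ∧ j ≤ 2 * k ∧
      lam ≤ 2 * Real.pi * j / (2 * k + 1) ∧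
      2 * Real.pi * j / (2 * k + 1) ≤ 2 * Real.pi - lam}
      = Set.Icc c.toNat (2 * (k:ℤ) + 1 - c).toNat := by
    ext j
    simpa [Set.mem_Icc] using key j
  calc Nat.card {j : ℕ // 1 ≤ j ∧ j ≤ 2 * k ∧
        lam ≤ 2 * Real.pi * j / (2 * k + 1) ∧
        2 * Real.pi * j / (2 * k + 1) ≤ 2 * Real.pi - lam}
      = ({j : ℕ | 1 ≤ j ∧ j ≤ 2 * k ∧
        lam ≤ 2 * Real.pi * j / (2 * k + 1) ∧
        2 * Real.pi * j / (2 * k + 1) ≤ 2 * Real.pi - lam} : Set ℕ).ncard := by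
        rw [← Nat.card_coe_set_eq]; rfl
    _ = (Set.Icc c.toNat (2 * (k:ℤ) + 1 - c).toNat).ncard := by rw [hEq]
    _ = (2 * (k:ℤ) + 1 - c).toNat + 1 - c.toNat := ncard_Icc_nat _ _
    _ = (2 * ((k : ℤ) + 1 - c)).toNat := by omega

/-- If `λ ∈ (0, π)` and `λ ≠ π/2`, then there is a positive even integer `2l` such that
the number of positive integers `k` with
`card {j : 1 ≤ j ≤ 2k, λ ≤ 2πj/(2k+1) ≤ 2π − λ} = 2l` is not equal to `2`. -/
theorem stmt_14 (lam : ℝ) (hlam0 : 0 < lam) (hlampi : lam < Real.pi)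
    (hne : lam ≠ Real.pi / 2) :
    ∃ l : ℕ, 1 ≤ l ∧
      {k : ℕ | 0 < k ∧ Nat.card {j : ℕ // 1 ≤ j ∧ j ≤ 2 * k ∧
        lam ≤ 2 * Real.pi * j / (2 * k + 1) ∧
        2 * Real.pi * j / (2 * k + 1) ≤ 2 * Real.pi - lam} = 2 * l}.ncard ≠ 2 := by
  have hπ := Real.pi_pos
  have h2π : (0:ℝ) < 2 * Real.pi := by linarith
  set c : ℕ → ℤ := fun k => ⌈lam * (2 * (k : ℝ) + 1) / (2 * Real.pi)⌉ with hcdef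
  set L : ℕ → ℤ := fun k => (k : ℤ) + 1 - c k with hLdef
  have hcbound : ∀ k : ℕ, 1 ≤ c k ∧ c k ≤ (k : ℤ) + 1 := by
    intro k
    constructor
    · exact Int.ceil_pos.mpr (by positivity)
    · apply Int.ceil_le.mpr
      rw [div_le_iff₀ h2π]
      push_cast
      nlinarith
  have hstep : ∀ k : ℕ, L k ≤ L (k + 1) ∧ L (k + 1) ≤ L k + 1 := by
    intro k
    have he : lam * (2 * ((k:ℝ) + 1) + 1) / (2 * Real.pi)
        = lam * (2 * (k:ℝ) + 1) / (2 * Real.pi) + lam / Real.pi := by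
      field_simp
      ring
    have hlt1 : lam / Real.pi < 1 := (div_lt_one hπ).mpr hlampi
    have hge0 : 0 ≤ lam / Real.pi := by positivity
    have h1 : c k ≤ c (k + 1) := by
      apply Int.ceil_mono
      push_cast
      rw [he]
      linarith
    have h2 : c (k + 1) ≤ c k + 1 := by
      apply Int.ceil_le.mpr
      push_cast
      rw [he]
      have := Int.le_ceil (lam * (2 * (k:ℝ) + 1) / (2 * Real.pi))
      linarith
    simp only [hLdef]
    push_cast
    omega
  have hmono : Monotone L := monotone_nat_of_le_succ (fun k => (hstep k).1)
  have hmono' : ∀ {k1 k2 : ℕ}, k1 ≤ k2 → L k1 ≤ L k2 := fun h => hmono h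
  set S : ℕ → Set ℕ := fun l => {k : ℕ | 0 < k ∧ L k = (l : ℤ)} with hSdef
  by_contra hcon
  push_neg at hcon
  have hS : ∀ l : ℕ, 1 ≤ l → (S l).ncard = 2 := by
    intro l hl
    have := hcon l hl
    have hsetEq : {k : ℕ | 0 < k ∧ Nat.card {j : ℕ // 1 ≤ j ∧ j ≤ 2 * k ∧
        lam ≤ 2 * Real.pi * j / (2 * k + 1) ∧
        2 * Real.pi * j / (2 * k + 1) ≤ 2 * Real.pi - lam} = 2 * l} = S l := by
      ext k
      have hcard : Nat.card {j : ℕ // 1 ≤ j ∧ j ≤ 2 * k ∧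
          lam ≤ 2 * Real.pi * j / (2 * k + 1) ∧
          2 * Real.pi * j / (2 * k + 1) ≤ 2 * Real.pi - lam}
          = (2 * ((k : ℤ) + 1 - c k)).toNat := card_formula lam hlam0 hlampi k
      have hcb := hcbound k
      simp only [Set.mem_setOf_eq, hSdef, hcard, hLdef]
      omega
    rw [← hsetEq]
    exact this
  have hfin : ∀ l : ℕ, 1 ≤ l → (S l).Finite := by
    intro l hl
    by_contra h
    have h0 := Set.Infinite.ncard h
    rw [hS l hl] at h0
    omega
  -- base case: S 1 = {a, a+1}
  obtain ⟨x, y, hxy, hset1⟩ := Set.ncard_eq_two.mp (hS 1 le_rfl)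
  have hmemx : x ∈ S 1 := by rw [hset1]; left; rfl
  have hmemy : y ∈ S 1 := by rw [hset1]; right; rfl
  -- wlog x < y
  obtain ⟨a, b, hab, hmema, hmemb, hset1'⟩ :
      ∃ a b : ℕ, a < b ∧ a ∈ S 1 ∧ b ∈ S 1 ∧ S 1 = {a, b} := by
    rcases lt_or_gt_of_ne hxy with h | h
    · exact ⟨x, y, h, hmemx, hmemy, hset1⟩
    · exact ⟨y, x, h, hmemy, hmemx, by rw [hset1, Set.pair_comm]⟩
  have ha0 : 0 < a := hmema.1
  have hb : b = a + 1 := by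
    by_contra hne'
    have hsub : Set.Icc a b ⊆ S 1 := by
      intro k hk
      rw [Set.mem_Icc] at hk
      refine ⟨lt_of_lt_of_le ha0 hk.1, ?_⟩
      have h1 := hmono' hk.1
      have h2 := hmono' hk.2
      have := hmema.2
      have := hmemb.2
      omega
    have h3 := Set.ncard_le_ncard hsub (hfin 1 le_rfl)
    rw [hS 1 le_rfl, ncard_Icc_nat] at h3
    omega
  subst hb
  -- inductive claim
  have main : ∀ n : ℕ, L (a + 2 * n) = (n : ℤ) + 1 ∧ L (a + 2 * n + 1) = (n : ℤ) + 1 := by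
    intro n
    induction n with
    | zero =>
      constructor
      · simpa using hmema.2
      · simpa using hmemb.2
    | succ n ih =>
      have h1 : L (a + 2 * n + 2) = (n : ℤ) + 2 := by
        have hge : L (a + 2 * n + 1) ≤ L (a + 2 * n + 2) :=
          hmono' (show a + 2 * n + 1 ≤ a + 2 * n + 2 by omega)
        have hle : L (a + 2 * n + 2) ≤ L (a + 2 * n + 1) + 1 := (hstep (a + 2 * n + 1)).2
        have hihs := ih.2
        rcases (show L (a + 2 * n + 2) = (n:ℤ) + 1 ∨ L (a + 2 * n + 2) = (n:ℤ) + 2 by omega)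
          with h | h
        · exfalso
          have hsub : Set.Icc (a + 2 * n) (a + 2 * n + 2) ⊆ S (n + 1) := by
            intro k hk
            rw [Set.mem_Icc] at hk
            refine ⟨by omega, ?_⟩
            have hg1 := hmono' hk.1
            have hg2 := hmono' hk.2
            have := ih.1
            push_cast
            omega
          have h3 := Set.ncard_le_ncard hsub (hfin (n + 1) (by omega))
          rw [hS (n + 1) (by omega), ncard_Icc_nat] at h3
          omega
        · exact h
      have h2 : L (a + 2 * n + 3) = (n : ℤ) + 2 := by
        have hge : L (a + 2 * n + 2) ≤ L (a + 2 * n + 3) :=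
          hmono' (show a + 2 * n + 2 ≤ a + 2 * n + 3 by omega)
        have hle : L (a + 2 * n + 3) ≤ L (a + 2 * n + 2) + 1 := (hstep (a + 2 * n + 2)).2
        rcases (show L (a + 2 * n + 3) = (n:ℤ) + 2 ∨ L (a + 2 * n + 3) = (n:ℤ) + 3 by omega)
          with h | h
        · exact h
        · exfalso
          have hsub : S (n + 2) ⊆ {a + 2 * n + 2} := by
            intro k hk
            obtain ⟨hk0, hkL⟩ := hk
            simp only [Set.mem_singleton_iff]
            by_contra hkne
            rcases (show k ≤ a + 2 * n + 1 ∨ a + 2 * n + 3 ≤ k by omega) with hc' | hc'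
            · have := hmono' hc'
              have := ih.2
              push_cast at hkL
              omega
            · have := hmono' hc'
              push_cast at hkL
              omega
          have h3 := Set.ncard_le_ncard hsub (Set.finite_singleton _)
          rw [hS (n + 2) (by omega), Set.ncard_singleton] at h3
          omega
      constructor
      · rw [show a + 2 * (n + 1) = a + 2 * n + 2 by ring]
        push_cast
        omega
      · rw [show a + 2 * (n + 1) + 1 = a + 2 * n + 3 by ring]
        push_cast
        omega
  -- extract ceiling equalities
  have hceil : ∀ n : ℕ, (⌈lam * (2 * ((a : ℝ) + 2 * n) + 1) / (2 * Real.pi)⌉ : ℤ)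
      = (a : ℤ) + n := by
    intro n
    have h := (main n).1
    simp only [hLdef, hcdef] at h
    have harg : ((a + 2 * n : ℕ) : ℝ) = (a : ℝ) + 2 * n := by push_cast; ring
    rw [harg] at h
    push_cast at h ⊢
    omega
  have hbounds : ∀ n : ℕ,
      ((a : ℝ) + n - 1 < lam * (2 * ((a : ℝ) + 2 * n) + 1) / (2 * Real.pi)) ∧
      (lam * (2 * ((a : ℝ) + 2 * n) + 1) / (2 * Real.pi) ≤ (a : ℝ) + n) := by
    intro n
    constructor
    · have h := Int.lt_ceil.mp (show (a : ℤ) + n - 1 < ⌈lam * (2 * ((a : ℝ) + 2 * n) + 1) / (2 * Real.pi)⌉ by rw [hceil n]; omega)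
      push_cast at h
      linarith
    · have h := Int.le_ceil (lam * (2 * ((a : ℝ) + 2 * n) + 1) / (2 * Real.pi))
      -- wrong direction; use ceil_le
      have h2 := Int.ceil_le.mp (le_of_eq (hceil n))
      push_cast at h2
      linarith
  -- split into linear form
  have hlin : ∀ n : ℕ,
      ((a : ℝ) + n - 1 < lam * (2 * (a : ℝ) + 1) / (2 * Real.pi) + n * (2 * lam / Real.pi)) ∧
      (lam * (2 * (a : ℝ) + 1) / (2 * Real.pi) + n * (2 * lam / Real.pi) ≤ (a : ℝ) + n) := by
    intro n
    have he : lam * (2 * ((a : ℝ) + 2 * n) + 1) / (2 * Real.pi)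
        = lam * (2 * (a : ℝ) + 1) / (2 * Real.pi) + n * (2 * lam / Real.pi) := by
      field_simp
      ring
    have h := hbounds n
    rw [he] at h
    exact h
  have hdne : 2 * lam / Real.pi - 1 ≠ 0 := by
    intro h
    apply hne
    have h2 : 2 * lam = Real.pi := by
      field_simp at h
      linarith
    linarith
  rcases lt_or_gt_of_ne hdne with hdlt | hdgt
  · obtain ⟨n, hn⟩ := exists_nat_gt
      ((lam * (2 * (a : ℝ) + 1) / (2 * Real.pi) + 1 - a) / (1 - 2 * lam / Real.pi))
    have h := (hlin n).1
    have h1 : (0:ℝ) < 1 - 2 * lam / Real.pi := by linarith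
    have hnd := (div_lt_iff₀ h1).mp hn
    nlinarith [h, hnd]
  · obtain ⟨n, hn⟩ := exists_nat_gt
      (((a : ℝ) - lam * (2 * (a : ℝ) + 1) / (2 * Real.pi)) / (2 * lam / Real.pi - 1))
    have h := (hlin n).2
    have h1 : (0:ℝ) < 2 * lam / Real.pi - 1 := hdgt
    have hnd := (div_lt_iff₀ h1).mp hn
    nlinarith [h, hnd]
end
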